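/- Let T be a bounded m-isometry on a complex Hilbert space H and e a unit vector. Define μ on integers by μ(k) = ⟨β_{m−1}(T) e, T^k e⟩ for k ≥ 0 and μ(−k) = conj(μ(k)). Then ⟨β_{m−1}(T) T^k e, T^l e⟩ = μ(l−k) for all k, l ≥ 0, and the quadratic form ∑_{k,l=0}^{N} a_k conj(a_l) μ(l−k) = ⟨β_{m−1}(T) p(T)e, p(T)e⟩ ≥ 0 for every polynomial p(z) = ∑_{k=0}^{N} a_k z^k; i.e., (μ(l−k))_{k,l} is a positive semidefinite kernel. -/

import Mathlib

open ContinuousLinearMap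

variable {H : Type*} [NormedAddCommGroup H] [InnerProductSpace ℂ H] [CompleteSpace H]

/-- `beta T n = ∑_{j=0}^n (-1)^{n-j} C(n,j) (T*)^j T^j`. -/
noncomputable def beta (T : H →L[ℂ] H) (n : ℕ) : H →L[ℂ] H :=
  ∑ j ∈ Finset.range (n + 1),
    ((-1 : ℂ) ^ (n - j) * (n.choose j : ℂ)) • ((ContinuousLinearMap.adjoint T) ^ j * T ^ j)

lemma beta_succ (T : H →L[ℂ] H) (n : ℕ) :
    beta T (n + 1) = adjoint T * beta T n * T - beta T n := by
  unfold beta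
  rw [Finset.sum_range_succ' (fun j => ((-1 : ℂ) ^ (n + 1 - j) * ((n+1).choose j : ℂ)) •
      ((adjoint T) ^ j * T ^ j))]
  have hmul : (adjoint T) * (∑ j ∈ Finset.range (n + 1),
      ((-1 : ℂ) ^ (n - j) * (n.choose j : ℂ)) • ((adjoint T) ^ j * T ^ j)) * T
      = ∑ j ∈ Finset.range (n + 1),
        ((-1 : ℂ) ^ (n - j) * (n.choose j : ℂ)) • ((adjoint T) ^ (j+1) * T ^ (j+1)) := by
    rw [Finset.mul_sum, Finset.sum_mul]
    refine Finset.sum_congr rfl fun j _ => ?_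
    rw [mul_smul_comm, smul_mul_assoc]
    congr 1
    rw [pow_succ', pow_succ]
    noncomm_ring
  rw [hmul]
  rw [Finset.sum_range_succ' (fun j => ((-1 : ℂ) ^ (n - j) * (n.choose j : ℂ)) •
      ((adjoint T) ^ j * T ^ j))]
  rw [sub_add_eq_sub_sub]
  have hB : ∑ j ∈ Finset.range n,
      ((-1 : ℂ) ^ (n - (j+1)) * (n.choose (j+1) : ℂ)) • ((adjoint T) ^ (j+1) * T ^ (j+1))
      = ∑ j ∈ Finset.range (n+1),
      ((-1 : ℂ) ^ (n - (j+1)) * (n.choose (j+1) : ℂ)) • ((adjoint T) ^ (j+1) * T ^ (j+1)) := by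
    rw [Finset.sum_range_succ]
    simp [Nat.choose_succ_self]
  rw [hB]
  have hcoef : ∀ j ∈ Finset.range (n+1),
      ((-1 : ℂ) ^ (n + 1 - (j+1)) * ((n+1).choose (j+1) : ℂ)) • ((adjoint T) ^ (j+1) * T ^ (j+1))
      = ((-1 : ℂ) ^ (n - j) * (n.choose j : ℂ)) • ((adjoint T) ^ (j+1) * T ^ (j+1))
        - ((-1 : ℂ) ^ (n - (j+1)) * (n.choose (j+1) : ℂ)) • ((adjoint T) ^ (j+1) * T ^ (j+1)) := by
    intro j hj
    rw [← sub_smul]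
    congr 1
    rw [Nat.succ_sub_succ, Nat.choose_succ_succ]
    rcases Nat.lt_or_ge j n with h | h
    · have h1 : n - j = (n - (j+1)) + 1 := by omega
      rw [h1]
      push_cast
      ring
    · have hj' : j = n := by simp at hj; omega
      subst hj'
      simp [Nat.choose_succ_self]
  rw [Finset.sum_congr rfl hcoef, Finset.sum_sub_distrib]
  have h0 : ((-1:ℂ)) ^ (n + 1 - 0) * (((n+1).choose 0 : ℕ) : ℂ)
      = -(((-1:ℂ)) ^ (n - 0) * ((n.choose 0 : ℕ) : ℂ)) := by
    simp [pow_succ]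
  rw [h0, neg_smul]
  abel

lemma adj_pow_inner (T : H →L[ℂ] H) (j : ℕ) (x y : H) :
    (inner ℂ x (((adjoint T) ^ j) y) : ℂ) = inner ℂ ((T ^ j) x) y := by
  induction j generalizing y with
  | zero => simp
  | succ n ih =>
    rw [pow_succ, ContinuousLinearMap.mul_apply, ih, adjoint_inner_right, pow_succ', ContinuousLinearMap.mul_apply]

lemma beta_herm (T : H →L[ℂ] H) (n : ℕ) (x y : H) :
    (inner ℂ x ((beta T n) y) : ℂ) = (starRingEnd ℂ) (inner ℂ y ((beta T n) x)) := by
  unfold beta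
  simp only [ContinuousLinearMap.sum_apply, inner_sum, ContinuousLinearMap.smul_apply,
    inner_smul_right, ContinuousLinearMap.mul_apply, map_sum, map_mul]
  refine Finset.sum_congr rfl fun j _ => ?_
  rw [adj_pow_inner, adj_pow_inner, ← inner_conj_symm ((T ^ j) x)]
  congr 1
  simp [map_mul, map_pow]

lemma beta_inv (T : H →L[ℂ] H) (m : ℕ) (hm : 1 ≤ m) (hT : beta T m = 0) :
    ∀ (k : ℕ) (u v : H),
      (inner ℂ ((T ^ k) u) ((beta T (m - 1)) ((T ^ k) v)) : ℂ) = inner ℂ u ((beta T (m - 1)) v) := by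
  have hrec : adjoint T * beta T (m - 1) * T - beta T (m - 1) = 0 := by
    rw [← beta_succ, Nat.sub_add_cancel hm, hT]
  have hstep : ∀ u v : H,
      (inner ℂ (T u) ((beta T (m - 1)) (T v)) : ℂ) = inner ℂ u ((beta T (m - 1)) v) := by
    intro u v
    have h1 : (beta T (m-1)) v = (adjoint T * beta T (m - 1) * T) v := by
      rw [sub_eq_zero] at hrec; rw [hrec]
    rw [h1, ContinuousLinearMap.mul_apply, ContinuousLinearMap.mul_apply, adjoint_inner_right]
  intro k
  induction k with
  | zero => simp
  | succ n ih =>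
    intro u v
    rw [pow_succ', ContinuousLinearMap.mul_apply, ContinuousLinearMap.mul_apply, hstep, ih]

open Filter in
lemma tendsto_atBot_of_diff (h : ℕ → ℝ)
    (hd : Tendsto (fun n => h (n + 1) - h n) atTop atBot) : Tendsto h atTop atBot := by
  obtain ⟨N, hN⟩ := (tendsto_atBot.mp hd (-1)).exists_forall_of_atTop
  have key : ∀ j : ℕ, h (N + j) ≤ h N - j := by
    intro j
    induction j with
    | zero => simp
    | succ i ih =>
      have h2 := hN (N + i) (Nat.le_add_right _ _)
      have e2 : h (N + (i + 1)) = h (N + i + 1) := rfl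
      push_cast
      linarith
  refine tendsto_atBot_mono' atTop (f₂ := h) (f₁ := fun n : ℕ => h N + (N : ℝ) - (n : ℝ)) ?_ ?_
  · filter_upwards [eventually_ge_atTop N] with n hn
    have := key (n - N)
    have hc : N + (n - N) = n := by omega
    rw [hc] at this
    have : h n ≤ h N - ((n : ℝ) - N) := by
      have hcast : ((n - N : ℕ) : ℝ) = (n : ℝ) - N := by push_cast [hn]; ring
      rw [hcast] at this; exact this
    linarith
  · apply tendsto_atBot_add_const_left
    exact tendsto_neg_atBot_iff.mpr tendsto_natCast_atTop_atTop

def dd (f : ℕ → ℝ) : ℕ → ℝ := fun n => f (n + 1) - f n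

open Filter in
lemma tendsto_atBot_of_iter_diff (j : ℕ) :
    ∀ h : ℕ → ℝ, Tendsto (dd^[j] h) atTop atBot → Tendsto h atTop atBot := by
  induction j with
  | zero => intro h hh; exact hh
  | succ n ih =>
    intro h hh
    rw [Function.iterate_succ_apply'] at hh
    exact ih h (tendsto_atBot_of_diff _ hh)

open Filter in
lemma beta_pos (T : H →L[ℂ] H) (m : ℕ) (hm : 1 ≤ m) (hT : beta T m = 0) (x : H) :
    0 ≤ (inner ℂ x ((beta T (m - 1)) x) : ℂ).re := by
  by_contra hneg
  push_neg at hneg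
  set g : ℕ → ℝ := fun n => (inner ℂ ((T ^ n) x) ((T ^ n) x) : ℂ).re with hg
  have hg0 : ∀ n, 0 ≤ g n := fun n => by
    simpa [hg] using inner_self_nonneg (𝕜 := ℂ) (x := (T ^ n) x)
  -- φ k n = re ⟨T^n x, β_k T^n x⟩ equals dd^[k] g n
  have hphi : ∀ k n, dd^[k] g n = (inner ℂ ((T ^ n) x) ((beta T k) ((T ^ n) x)) : ℂ).re := by
    intro k
    induction k with
    | zero =>
      intro n
      have : beta T 0 = 1 := by
        unfold beta; simp
      rw [this]; rfl
    | succ k ih =>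
      intro n
      rw [Function.iterate_succ_apply']
      show dd^[k] g (n + 1) - dd^[k] g n = _
      rw [ih, ih, beta_succ]
      have : ((adjoint T * beta T k * T - beta T k) ((T ^ n) x)) =
          (adjoint T) ((beta T k) (T ((T ^ n) x))) - (beta T k) ((T ^ n) x) := by
        simp [mul_apply]
      rw [this, inner_sub_right, adjoint_inner_right]
      have hTn : (T ^ (n+1)) x = T ((T ^ n) x) := by
        rw [pow_succ', ContinuousLinearMap.mul_apply]
      rw [hTn]
      simp [Complex.sub_re]
  -- dd^[m-1] g is constant
  have hconst : ∀ n, dd^[m-1] g n = dd^[m-1] g 0 := by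
    intro n
    rw [hphi, hphi]
    have := beta_inv T m hm hT n x x
    simp only [pow_zero, ContinuousLinearMap.one_apply] at *
    rw [this]
  have hc0 : dd^[m-1] g 0 = (inner ℂ x ((beta T (m-1)) x) : ℂ).re := by
    rw [hphi]; simp
  rcases Nat.exists_eq_add_of_le hm with ⟨K, hK⟩
  have hmK : m - 1 = K := by omega
  rcases Nat.eq_zero_or_pos K with h0 | hKpos
  · -- m = 1 : β_0 = id, inner ℂ nonneg
    rw [hmK, h0] at hc0 hneg
    simp only [Function.iterate_zero, id_eq] at hc0
    have := hg0 0
    rw [hc0] at this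
    exact hneg.not_ge this
  · -- K ≥ 1 : dd^[K] g constant negative
    set c := dd^[m-1] g 0 with hcdef
    have hcneg : c < 0 := by rw [hc0]; exact hneg
    rcases Nat.exists_eq_add_of_le hKpos with ⟨J, hJ⟩
    have hKJ : K = J + 1 := by omega
    -- dd^[J] g n = dd^[J] g 0 + n * c
    have hlin : ∀ n, dd^[J] g n = dd^[J] g 0 + n * c := by
      intro n
      induction n with
      | zero => simp
      | succ i ih =>
        have hdc : dd^[J + 1] g i = c := by
          rw [← hKJ, ← hmK]; exact hconst i
        rw [Function.iterate_succ_apply'] at hdc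
        have hdc' : dd^[J] g (i + 1) - dd^[J] g i = c := hdc
        push_cast
        linarith
    have htend : Tendsto (dd^[J] g) atTop atBot := by
      rw [funext hlin]
      apply tendsto_atBot_add_const_left
      exact Tendsto.atTop_mul_const_of_neg hcneg tendsto_natCast_atTop_atTop
    have := tendsto_atBot_of_iter_diff J g htend
    obtain ⟨n, hn⟩ := (tendsto_atBot.mp this (-1)).exists
    linarith [hg0 n]

theorem positive_semidefinite_kernel (T : H →L[ℂ] H) (m : ℕ) (hm : 1 ≤ m)
    (hT : beta T m = 0) (e : H) (he : ‖e‖ = 1)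
    (μ : ℤ → ℂ)
    (hμ : ∀ k : ℕ, μ k = (inner ℂ ((T ^ k) e) ((beta T (m - 1)) e) : ℂ))
    (hherm : ∀ k : ℤ, μ (-k) = (starRingEnd ℂ) (μ k)) :
    (∀ k l : ℕ, (inner ℂ ((T ^ l) e) ((beta T (m - 1)) ((T ^ k) e)) : ℂ) = μ ((l : ℤ) - (k : ℤ))) ∧
    ∀ (N : ℕ) (a : ℕ → ℂ),
      (∑ k ∈ Finset.range (N + 1), ∑ l ∈ Finset.range (N + 1),
          a k * (starRingEnd ℂ) (a l) * μ ((l : ℤ) - (k : ℤ)))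
        = (inner ℂ (∑ k ∈ Finset.range (N + 1), a k • (T ^ k) e)
            ((beta T (m - 1)) (∑ k ∈ Finset.range (N + 1), a k • (T ^ k) e)) : ℂ) ∧
      0 ≤ (inner ℂ (∑ k ∈ Finset.range (N + 1), a k • (T ^ k) e)
            ((beta T (m - 1)) (∑ k ∈ Finset.range (N + 1), a k • (T ^ k) e)) : ℂ).re ∧
      (inner ℂ (∑ k ∈ Finset.range (N + 1), a k • (T ^ k) e)
            ((beta T (m - 1)) (∑ k ∈ Finset.range (N + 1), a k • (T ^ k) e)) : ℂ).im = 0 := by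
  have hinv := beta_inv T m hm hT
  have part1 : ∀ k l : ℕ,
      (inner ℂ ((T ^ l) e) ((beta T (m - 1)) ((T ^ k) e)) : ℂ) = μ ((l : ℤ) - (k : ℤ)) := by
    intro k l
    rcases le_or_gt k l with h | h
    · have hdec : (T ^ l) e = (T ^ k) ((T ^ (l - k)) e) := by
        rw [← ContinuousLinearMap.mul_apply, ← pow_add]
        congr 2
        omega
      rw [hdec, hinv k ((T ^ (l - k)) e) e, ← hμ (l - k)]
      congr 1
      omega
    · have hdec : (T ^ k) e = (T ^ l) ((T ^ (k - l)) e) := by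
        rw [← ContinuousLinearMap.mul_apply, ← pow_add]
        congr 2
        omega
      rw [hdec, hinv l e ((T ^ (k - l)) e), beta_herm, ← hμ (k - l), ← hherm]
      congr 1
      omega
  refine ⟨part1, fun N a => ?_⟩
  set S := ∑ k ∈ Finset.range (N + 1), a k • (T ^ k) e with hS
  have hexp : (inner ℂ S ((beta T (m - 1)) S) : ℂ)
      = ∑ k ∈ Finset.range (N + 1), ∑ l ∈ Finset.range (N + 1),
          (starRingEnd ℂ) (a k) * (a l *
            (inner ℂ ((T ^ k) e) ((beta T (m - 1)) ((T ^ l) e)) : ℂ)) := by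
    rw [hS, map_sum, sum_inner]
    refine Finset.sum_congr rfl fun k _ => ?_
    rw [inner_smul_left, inner_sum, Finset.mul_sum]
    refine Finset.sum_congr rfl fun l _ => ?_
    rw [map_smul, inner_smul_right]
  refine ⟨?_, beta_pos T m hm hT S, ?_⟩
  · rw [hexp]
    rw [Finset.sum_comm]
    refine Finset.sum_congr rfl fun k _ => Finset.sum_congr rfl fun l _ => ?_
    rw [part1 l k]
    ring
  · have h := beta_herm T (m - 1) S S
    exact Complex.conj_eq_iff_im.mp h.symm
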